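/- Let p be a prime, A a commutative ring, and I an ideal of A with I·I = 0. Then the kernel of the induced ring homomorphism W(A) → W(A/I) of p-typical Witt rings (which consists of the Witt vectors all of whose coordinates lie in I) is a square-zero ideal of W(A). -/

import Mathlib

open MvPolynomial Finset

namespace WittKerAux

variable (p : ℕ) [Fact p.Prime]

noncomputable abbrev R : Type := MvPolynomial (ℕ ⊕ ℕ) ℤ

/-- The monomial ideal generated by the mixed products `X (inl i) * X (inr j)`. -/
noncomputable def P : Ideal (R) :=
  Ideal.span ((fun s => monomial s (1 : ℤ)) ''
    Set.range (fun ij : ℕ × ℕ =>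
      Finsupp.single (Sum.inl ij.1) 1 + Finsupp.single (Sum.inr ij.2) 1))

lemma monomial_mixed (i j : ℕ) :
    (monomial (Finsupp.single (Sum.inl i) 1 + Finsupp.single (Sum.inr j) 1) (1 : ℤ) : R) =
      X (Sum.inl i) * X (Sum.inr j) := by
  rw [monomial_single_add, ← X_pow_eq_monomial, pow_one, pow_one]

lemma X_mul_X_mem_P (i j : ℕ) : (X (Sum.inl i) * X (Sum.inr j) : R) ∈ P := by
  apply Ideal.subset_span
  exact ⟨Finsupp.single (Sum.inl i) 1 + Finsupp.single (Sum.inr j) 1, ⟨(i, j), rfl⟩,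
    monomial_mixed i j⟩

noncomputable def a : WittVector p R := WittVector.mk p (fun i => X (Sum.inl i))
noncomputable def b : WittVector p R := WittVector.mk p (fun j => X (Sum.inr j))

lemma ghost_a_mem (n : ℕ) :
    WittVector.ghostComponent n (a p) ∈
      Ideal.span (X '' (Set.range Sum.inl) : Set R) := by
  rw [WittVector.ghostComponent_apply, aeval_wittPolynomial]
  refine Ideal.sum_mem _ fun i _ => Ideal.mul_mem_left _ _ ?_
  refine Ideal.pow_mem_of_mem _ ?_ _ (pow_pos (Fact.out : p.Prime).pos _)
  exact Ideal.subset_span ⟨Sum.inl i, ⟨i, rfl⟩, by simp [a, WittVector.coeff_mk]⟩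

lemma ghost_b_mem (n : ℕ) :
    WittVector.ghostComponent n (b p) ∈
      Ideal.span (X '' (Set.range Sum.inr) : Set R) := by
  rw [WittVector.ghostComponent_apply, aeval_wittPolynomial]
  refine Ideal.sum_mem _ fun i _ => Ideal.mul_mem_left _ _ ?_
  refine Ideal.pow_mem_of_mem _ ?_ _ (pow_pos (Fact.out : p.Prime).pos _)
  exact Ideal.subset_span ⟨Sum.inr i, ⟨i, rfl⟩, by simp [b, WittVector.coeff_mk]⟩

lemma ghost_mul_mem (n : ℕ) :
    WittVector.ghostComponent n (a p * b p) ∈ P := by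
  rw [map_mul]
  have h : Ideal.span (X '' (Set.range Sum.inl) : Set R) *
      Ideal.span (X '' (Set.range Sum.inr) : Set R) ≤ P := by
    rw [Ideal.span_mul_span, Ideal.span_le]
    intro z hz
    simp only [Set.mem_mul, Set.mem_iUnion, Set.mem_singleton_iff, Set.mem_image, Set.mem_range] at hz
    obtain ⟨u, ⟨-, ⟨i, rfl⟩, rfl⟩, v, ⟨-, ⟨j, rfl⟩, rfl⟩, rfl⟩ := hz
    exact X_mul_X_mem_P i j
  exact h (Ideal.mul_mem_mul (ghost_a_mem p n) (ghost_b_mem p n))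

lemma key (n : ℕ) : (a p * b p).coeff n ∈ P := by
  induction n using Nat.strong_induction_on with
  | _ n ih =>
    have hg : (∑ i ∈ range (n + 1),
        (p : R) ^ i * (a p * b p).coeff i ^ p ^ (n - i)) ∈ P := by
      have := ghost_mul_mem p n
      rwa [WittVector.ghostComponent_apply, aeval_wittPolynomial] at this
    rw [Finset.sum_range_succ, Nat.sub_self, pow_zero, pow_one] at hg
    have hsub : (∑ i ∈ range n,
        (p : R) ^ i * (a p * b p).coeff i ^ p ^ (n - i)) ∈ P :=
      Ideal.sum_mem _ fun i hi => Ideal.mul_mem_left _ _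
        (Ideal.pow_mem_of_mem _ (ih i (Finset.mem_range.mp hi)) _
          (pow_pos (Fact.out : p.Prime).pos _))
    have hmul : (p : R) ^ n * (a p * b p).coeff n ∈ P := by
      have := Ideal.sub_mem _ hg hsub
      simpa using this
    -- divide by `p ^ n` using the support criterion for monomial ideals
    have hC : (p : R) ^ n = C ((p : ℤ) ^ n) := by
      rw [map_pow, map_natCast]
    rw [hC] at hmul
    rw [P, mem_ideal_span_monomial_image] at hmul ⊢
    intro m hm
    refine hmul m ?_
    rw [mem_support_iff, coeff_C_mul]
    exact mul_ne_zero (pow_ne_zero _ (by exact_mod_cast (Fact.out : p.Prime).ne_zero))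
      (mem_support_iff.mp hm)

end WittKerAux

/-- If `I` is a square-zero ideal of `A`, then the kernel of the induced map
`W(A) → W(A/I)` of `p`-typical Witt rings (which consists of the Witt vectors all of whose
coordinates lie in `I`) is a square-zero ideal of `W(A)`. -/
theorem witt_ker_map_quotient_sq_zero (p : ℕ) [Fact p.Prime] (A : Type) [CommRing A]
    (I : Ideal A) (hI : I * I = ⊥) :
    (∀ x : WittVector p A,
      x ∈ RingHom.ker (WittVector.map (p := p) (Ideal.Quotient.mk I)) ↔
        ∀ n, x.coeff n ∈ I) ∧
    RingHom.ker (WittVector.map (p := p) (Ideal.Quotient.mk I)) *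
      RingHom.ker (WittVector.map (p := p) (Ideal.Quotient.mk I)) = ⊥ := by
  have hker : ∀ x : WittVector p A,
      x ∈ RingHom.ker (WittVector.map (p := p) (Ideal.Quotient.mk I)) ↔
        ∀ n, x.coeff n ∈ I := by
    intro x
    rw [RingHom.mem_ker, WittVector.ext_iff]
    simp [WittVector.map_coeff, WittVector.zero_coeff, Ideal.Quotient.eq_zero_iff_mem]
  refine ⟨hker, le_antisymm (Ideal.mul_le.mpr fun x hx y hy => ?_) bot_le⟩
  rw [hker] at hx hy
  rw [Ideal.mem_bot]
  -- specialize the universal computation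
  set φ : WittKerAux.R →+* A :=
    (MvPolynomial.aeval (Sum.elim x.coeff y.coeff) : WittKerAux.R →ₐ[ℤ] A).toRingHom with hφ
  have hφa : WittVector.map φ (WittKerAux.a p) = x := by
    apply WittVector.ext
    intro k
    simp [WittVector.map_coeff, WittKerAux.a, WittVector.coeff_mk, hφ]
  have hφb : WittVector.map φ (WittKerAux.b p) = y := by
    apply WittVector.ext
    intro k
    simp [WittVector.map_coeff, WittKerAux.b, WittVector.coeff_mk, hφ]
  have hP0 : ∀ z ∈ WittKerAux.P, φ z = 0 := by
    intro z hz
    refine Submodule.span_induction ?_ ?_ ?_ ?_ hz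
    · rintro g ⟨s, ⟨⟨i, j⟩, rfl⟩, rfl⟩
      show φ (monomial (Finsupp.single (Sum.inl i) 1 + Finsupp.single (Sum.inr j) 1)
          (1 : ℤ) : WittKerAux.R) = 0
      rw [WittKerAux.monomial_mixed]
      have hmem : x.coeff i * y.coeff j ∈ I * I := Ideal.mul_mem_mul (hx i) (hy j)
      rw [hI, Ideal.mem_bot] at hmem
      simpa [hφ] using hmem
    · exact map_zero φ
    · intro u v _ _ hu hv; rw [map_add, hu, hv, add_zero]
    · intro r u _ hu
      rw [smul_eq_mul, map_mul, hu, mul_zero]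
  apply WittVector.ext
  intro n
  have : x * y = WittVector.map φ (WittKerAux.a p * WittKerAux.b p) := by
    rw [map_mul, hφa, hφb]
  rw [this, WittVector.zero_coeff, WittVector.map_coeff]
  exact hP0 _ (WittKerAux.key p n)
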